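/- arXiv:1304.5822 — 3 statements merged into one kernel-verified Lean document; each statement's English description precedes it below -/
import Mathlib

section
/- The value x_1 = 1 is feasible, and the feasible set is upward closed: if x_1 ∈ [0,1] is feasible and x_1 ≤ y ≤ 1, then y is feasible. Consequently, writing x_1° = inf{x_1 ∈ [0,1] : x_1 is feasible}, the feasible set equals the interval [x_1°, 1] if x_1° is feasible and equals (x_1°, 1] otherwise. -/
/-- `upP d x1 i = (w_i, w_{i+1})`: the pair of consecutive values reaching nodes
`i` and `i+1`, computed from `x_1 = x1` via the upward equations
`x_{i+1} = 1 − ((1 − x_i)·w_{i−1})/(x_i·w_{i−1} − d_i)`, i.e.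
`w_{i+1} = w_i · (1 − (w_{i−1} − w_i)/(w_i − d_i))` (using `w_i = x_i·w_{i−1}`). -/
noncomputable def upP (d : ℕ → ℝ) (x1 : ℝ) : ℕ → ℝ × ℝ
  | 0 => (d 0, d 0 * x1)
  | i + 1 =>
      let p := upP d x1 i
      (p.2, p.2 * (1 - (p.1 - p.2) / (p.2 - d (i + 1))))

/-- `upW d x1 i = w_i`, the value reaching node `i` under the upward equations
started at `x_1 = x1`. -/
noncomputable def upW (d : ℕ → ℝ) (x1 : ℝ) (i : ℕ) : ℝ :=
  (upP d x1 i).1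

/-- `upX d x1 i = x_i`, the share on edge `e_i` computed from `x_1 = x1` by the
upward equations `x_{i+1} = 1 − ((1 − x_i)·w_{i−1})/(x_i·w_{i−1} − d_i)`
(rewritten as `x_{i+1} = 1 − (w_{i−1} − w_i)/(w_i − d_i)`). -/
noncomputable def upX (d : ℕ → ℝ) (x1 : ℝ) : ℕ → ℝ
  | 0 => 1
  | 1 => x1
  | i + 2 => 1 - (upW d x1 i - upW d x1 (i + 1)) / (upW d x1 (i + 1) - d (i + 1))

/-- `x1` is feasible: `x1 ∈ [0,1]` and the values produced by the upward
equations satisfy `x_i ∈ [0,1]` and `w_i > d_i` for all `i = 1,…,n`. -/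
def Feasible (n : ℕ) (d : ℕ → ℝ) (x1 : ℝ) : Prop :=
  0 ≤ x1 ∧ x1 ≤ 1 ∧
    ∀ i, 1 ≤ i → i ≤ n → (0 ≤ upX d x1 i ∧ upX d x1 i ≤ 1) ∧ d i < upW d x1 i

lemma upW_zero' (d : ℕ → ℝ) (x : ℝ) : upW d x 0 = d 0 := rfl
lemma upW_one' (d : ℕ → ℝ) (x : ℝ) : upW d x 1 = d 0 * x := rfl
lemma upW_add_two (d : ℕ → ℝ) (x : ℝ) (i : ℕ) :
    upW d x (i+2) = upW d x (i+1) *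
      (1 - (upW d x i - upW d x (i+1)) / (upW d x (i+1) - d (i+1))) := by
  simp [upW, upP]
lemma upX_one' (d : ℕ → ℝ) (x : ℝ) : upX d x 1 = x := rfl
lemma upX_add_two (d : ℕ → ℝ) (x : ℝ) (i : ℕ) :
    upX d x (i+2) = 1 - (upW d x i - upW d x (i + 1)) / (upW d x (i + 1) - d (i + 1)) := rfl

lemma upW_at_one (d : ℕ → ℝ) : ∀ i, upW d 1 i = d 0 := by
  have h : ∀ i, upW d 1 i = d 0 ∧ upW d 1 (i+1) = d 0 := by
    intro i
    induction i with
    | zero => exact ⟨rfl, by simp [upW_one']⟩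
    | succ j ih => exact ⟨ih.2, by rw [upW_add_two, ih.1, ih.2]; simp⟩
  exact fun i => (h i).1

lemma upX_at_one (d : ℕ → ℝ) : ∀ i, 1 ≤ i → upX d 1 i = 1 := by
  intro i hi
  match i, hi with
  | 1, _ => rfl
  | (k+2), _ => rw [upX_add_two, upW_at_one, upW_at_one]; simp

lemma step_arith (A B A' B' e : ℝ) (he : 0 ≤ e) (heB : e < B) (hBB : B ≤ B')
    (hd0' : 0 ≤ A' - B') (hdd : A' - B' ≤ A - B)
    (hx : 0 ≤ 1 - (A - B) / (B - e)) :
    (0 ≤ 1 - (A' - B') / (B' - e) ∧ 1 - (A' - B') / (B' - e) ≤ 1) ∧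
    B * (1 - (A - B) / (B - e)) ≤ B' * (1 - (A' - B') / (B' - e)) ∧
    0 ≤ B' - B' * (1 - (A' - B') / (B' - e)) ∧
    B' - B' * (1 - (A' - B') / (B' - e)) ≤ B - B * (1 - (A - B) / (B - e)) := by
  have hD : 0 < B - e := by linarith
  have hD' : 0 < B' - e := by linarith
  have hB0 : 0 ≤ B := by linarith
  have hB0' : 0 ≤ B' := by linarith
  have hr : (A' - B') / (B' - e) ≤ (A - B) / (B - e) :=
    div_le_div₀ (by linarith : (0:ℝ) ≤ A - B) hdd hD (by linarith)
  have hr0 : 0 ≤ (A' - B') / (B' - e) := div_nonneg hd0' hD'.le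
  have key : B' * ((A' - B') / (B' - e)) ≤ B * ((A - B) / (B - e)) := by
    rw [mul_div_assoc', mul_div_assoc', div_le_div_iff₀ hD' hD]
    nlinarith [mul_nonneg (mul_nonneg hB0 (sub_nonneg.2 hdd)) hD'.le,
      mul_nonneg (mul_nonneg hd0' he) (sub_nonneg.2 hBB)]
  have e1 : B' - B' * (1 - (A' - B') / (B' - e)) = B' * ((A' - B') / (B' - e)) := by ring
  have e2 : B - B * (1 - (A - B) / (B - e)) = B * ((A - B) / (B - e)) := by ring
  refine ⟨⟨by linarith, by linarith⟩, ?_, ?_, ?_⟩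
  · exact mul_le_mul hBB (by linarith) hx hB0'
  · rw [e1]; exact mul_nonneg hB0' hr0
  · rw [e1, e2]; exact key

lemma mono_aux (n : ℕ) (d : ℕ → ℝ) (hd0 : 0 < d 0)
    (hd : ∀ i, 1 ≤ i → i ≤ n → 0 ≤ d i ∧ d i < d 0)
    (x y : ℝ) (hx : Feasible n d x) (hxy : x ≤ y) (hy1 : y ≤ 1) :
    ∀ i, i + 1 ≤ n →
      upW d x (i+1) ≤ upW d y (i+1) ∧
      0 ≤ upW d y i - upW d y (i+1) ∧
      upW d y i - upW d y (i+1) ≤ upW d x i - upW d x (i+1) ∧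
      (0 ≤ upX d y (i+1) ∧ upX d y (i+1) ≤ 1) ∧
      d (i+1) < upW d y (i+1) := by
  obtain ⟨hx0, hx1, hxf⟩ := hx
  intro i
  induction i with
  | zero =>
    intro h1
    have hdx : d 1 < d 0 * x := by
      have := (hxf 1 le_rfl h1).2
      rwa [upW_one'] at this
    have hy0 : 0 ≤ y := hx0.trans hxy
    have hmul : d 0 * x ≤ d 0 * y := mul_le_mul_of_nonneg_left hxy hd0.le
    simp only [Nat.zero_add, upW_one', upW_zero', upX_one']
    refine ⟨?_, ?_, ?_, ⟨?_, ?_⟩, ?_⟩ <;> nlinarith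
  | succ i ih =>
    intro h2
    have ih' := ih (by omega)
    have hxi1 := hxf (i+1) (by omega) (by omega)
    have hxi2 := hxf (i+2) (by omega) h2
    have he : 0 ≤ d (i+1) := (hd (i+1) (by omega) (by omega)).1
    have hxX : 0 ≤ 1 - (upW d x i - upW d x (i+1)) / (upW d x (i+1) - d (i+1)) := by
      have := hxi2.1.1
      rwa [upX_add_two] at this
    have key := step_arith (upW d x i) (upW d x (i+1)) (upW d y i) (upW d y (i+1))
      (d (i+1)) he hxi1.2 ih'.1 ih'.2.1 ih'.2.2.1 hxX
    refine ⟨?_, ?_, ?_, ?_, ?_⟩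
    · rw [upW_add_two, upW_add_two]; exact key.2.1
    · rw [upW_add_two]; exact key.2.2.1
    · rw [upW_add_two, upW_add_two]; exact key.2.2.2
    · rw [upX_add_two]; exact key.1
    · have h3 : upW d x (i+2) ≤ upW d y (i+2) := by
        rw [upW_add_two, upW_add_two]; exact key.2.1
      exact lt_of_lt_of_le hxi2.2 h3

/-- `x1 = 1` is feasible, the feasible set is upward closed, and consequently it
equals `[x1°, 1]` or `(x1°, 1]` where `x1°` is the infimum of the feasible set,
according to whether `x1°` is itself feasible. -/
theorem feasible_region_structure (n : ℕ) (hn : 1 ≤ n) (d : ℕ → ℝ)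
    (hd0 : 0 < d 0) (hd : ∀ i, 1 ≤ i → i ≤ n → 0 ≤ d i ∧ d i < d 0) :
    Feasible n d 1 ∧
    (∀ x1 y : ℝ, Feasible n d x1 → x1 ≤ y → y ≤ 1 → Feasible n d y) ∧
    (Feasible n d (sInf {x1 | Feasible n d x1}) →
      {x1 | Feasible n d x1} = Set.Icc (sInf {x1 | Feasible n d x1}) 1) ∧
    (¬ Feasible n d (sInf {x1 | Feasible n d x1}) →
      {x1 | Feasible n d x1} = Set.Ioc (sInf {x1 | Feasible n d x1}) 1) := by
  have hfeas1 : Feasible n d 1 := by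
    refine ⟨zero_le_one, le_rfl, fun i h1 hni => ?_⟩
    rw [upX_at_one d i h1, upW_at_one]
    exact ⟨⟨zero_le_one, le_rfl⟩, (hd i h1 hni).2⟩
  have hup : ∀ x1 y : ℝ, Feasible n d x1 → x1 ≤ y → y ≤ 1 → Feasible n d y := by
    intro x y hx hxy hy1
    have hm := mono_aux n d hd0 hd x y hx hxy hy1
    refine ⟨hx.1.trans hxy, hy1, fun i h1 hni => ?_⟩
    match i, h1 with
    | (j+1), _ =>
      have := hm j hni
      exact ⟨this.2.2.2.1, this.2.2.2.2⟩
  set S := {x1 | Feasible n d x1} with hS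
  have hne : S.Nonempty := ⟨1, hfeas1⟩
  have hbdd : BddBelow S := ⟨0, fun z hz => hz.1⟩
  refine ⟨hfeas1, hup, ?_, ?_⟩
  · intro hmf
    ext z
    constructor
    · intro hz
      exact ⟨csInf_le hbdd hz, hz.2.1⟩
    · intro hz
      exact hup _ z hmf hz.1 hz.2
  · intro hmf
    ext z
    constructor
    · intro hz
      have hle : sInf S ≤ z := csInf_le hbdd hz
      refine ⟨lt_of_le_of_ne hle ?_, hz.2.1⟩
      intro h
      exact hmf (h ▸ hz)
    · intro hz
      obtain ⟨w, hwS, hwz⟩ := exists_lt_of_csInf_lt hne hz.1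
      exact hup w z hwS hwz.le hz.2
end

section
/- Strict monotonicity of payoffs: fix i ∈ {1,…,n} and let d_i' satisfy d_i < d_i' < d_0. Let x* be the unique fixed point of the instance with values (d_0, d_1,…,d_i,…,d_n) and x*' the unique fixed point of the instance where d_i is replaced by d_i' (all other values unchanged). Then the payoff of node i strictly increases: (1 − x*'_{i+1})·w*'_i > (1 − x*_{i+1})·w*_i, where w*_i = d_0·∏_{j=1}^{i} x*_j, w*'_i = d_0·∏_{j=1}^{i} x*'_j, and x*_{n+1} = x*'_{n+1} = 0 by convention. -/
/-- `pathW d x i` is the value `w_i = d_0 · ∏_{j=1}^{i} x_j` reaching node `i`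
in a path bargaining instance with values `d` and shares `x`. -/
noncomputable def pathW (d x : ℕ → ℝ) (i : ℕ) : ℝ :=
  d 0 * ∏ j ∈ Finset.Icc 1 i, x j

/-- A share vector: `x_i ∈ [0,1]` for `i = 1,…,n`. -/
def IsShareVector (n : ℕ) (x : ℕ → ℝ) : Prop :=
  ∀ i, 1 ≤ i → i ≤ n → 0 ≤ x i ∧ x i ≤ 1

/-- A fixed point of the path bargaining equations
`(1 − x_i)·w_{i−1} = (1 − x_{i+1})·(x_i·w_{i−1} − d_i)` for `i = 1,…,n`,
with the convention `x_{n+1} = 0`. -/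
def IsPathFixedPoint (n : ℕ) (d x : ℕ → ℝ) : Prop :=
  IsShareVector n x ∧
  ∀ i, 1 ≤ i → i ≤ n →
    (1 - x i) * pathW d x (i - 1) =
      (1 - (if i = n then 0 else x (i + 1))) * (x i * pathW d x (i - 1) - d i)

noncomputable def pathP (n : ℕ) (d x : ℕ → ℝ) (k : ℕ) : ℝ :=
  (1 - (if k = n then 0 else x (k+1))) * pathW d x k

lemma pathW_zero (d x : ℕ → ℝ) : pathW d x 0 = d 0 := by simp [pathW]

lemma pathW_succ (d x : ℕ → ℝ) (k : ℕ) :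
    pathW d x (k+1) = pathW d x k * x (k+1) := by
  rw [pathW, pathW, Finset.prod_Icc_succ_top (by omega), mul_assoc]

lemma pathP_top (n : ℕ) (d x : ℕ → ℝ) : pathP n d x n = pathW d x n := by
  simp [pathP]

lemma fp_eq (n : ℕ) (d x : ℕ → ℝ) (hx : IsPathFixedPoint n d x) (k : ℕ) (hk : k < n) :
    (1 - x (k+1)) * pathW d x k =
      (1 - (if k+1 = n then 0 else x (k+2))) * (x (k+1) * pathW d x k - d (k+1)) := by
  have h := hx.2 (k+1) (by omega) (by omega)
  simpa using h

lemma P_low (n : ℕ) (d x : ℕ → ℝ) (hx : IsPathFixedPoint n d x) (k : ℕ) (hk : k < n) :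
    pathP n d x k = (1 - (if k+1 = n then 0 else x (k+2))) * (pathW d x (k+1) - d (k+1)) := by
  have h1 : pathP n d x k = (1 - x (k+1)) * pathW d x k := by
    rw [pathP, if_neg (by omega)]
  rw [h1, fp_eq n d x hx k hk, pathW_succ]; ring

lemma keyP (n : ℕ) (d x : ℕ → ℝ) (hx : IsPathFixedPoint n d x) (k : ℕ) (hk : k < n) :
    pathP n d x k * pathW d x (k+1) =
      pathP n d x (k+1) * (pathW d x (k+1) - d (k+1)) := by
  rw [P_low n d x hx k hk, pathP]
  ring

lemma idW (n : ℕ) (d x : ℕ → ℝ) (k : ℕ) (hk : k < n) :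
    pathW d x k = pathW d x (k+1) + pathP n d x k := by
  have h1 : pathP n d x k = (1 - x (k+1)) * pathW d x k := by
    rw [pathP, if_neg (by omega)]
  rw [h1, pathW_succ]; ring

lemma posW (n : ℕ) (d x : ℕ → ℝ) (hd0 : 0 < d 0)
    (hd : ∀ j, 1 ≤ j → j ≤ n → 0 ≤ d j ∧ d j < d 0)
    (hx : IsPathFixedPoint n d x) :
    ∀ k, k ≤ n → 0 < pathW d x k := by
  intro k
  induction k with
  | zero => intro _; rw [pathW_zero]; exact hd0
  | succ k ih =>
    intro hk
    have hWk := ih (by omega)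
    have heq := fp_eq n d x hx k (by omega)
    have hxk := hx.1 (k+1) (by omega) (by omega)
    have hA : 0 ≤ 1 - (if k+1 = n then 0 else x (k+2)) := by
      by_cases h : k+1 = n
      · rw [if_pos h]; norm_num
      · rw [if_neg h]
        have := (hx.1 (k+2) (by omega) (by omega)).2
        linarith
    have hdk : 0 ≤ d (k+1) := (hd (k+1) (by omega) hk).1
    rw [pathW_succ]
    rcases lt_or_eq_of_le hxk.1 with h | h
    · exact mul_pos hWk h
    · exfalso
      rw [← h] at heq
      nlinarith [mul_nonneg hA hdk]

lemma posP (n : ℕ) (d x : ℕ → ℝ) (hd0 : 0 < d 0)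
    (hd : ∀ j, 1 ≤ j → j ≤ n → 0 ≤ d j ∧ d j < d 0)
    (hx : IsPathFixedPoint n d x) :
    ∀ k, k ≤ n → 0 < pathP n d x k := by
  have main : ∀ t k, n = k + t → 0 < pathP n d x k := by
    intro t
    induction t with
    | zero =>
      intro k hk
      have hkn : k = n := by omega
      rw [hkn, pathP_top]
      exact posW n d x hd0 hd hx n le_rfl
    | succ t ih =>
      intro k hkn
      have hk : k < n := by omega
      have hP1 : 0 < pathP n d x (k+1) := ih (k+1) (by omega)
      have hW1 : 0 < pathW d x (k+1) := posW n d x hd0 hd hx (k+1) (by omega)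
      have hWk : 0 < pathW d x k := posW n d x hd0 hd hx k (by omega)
      have hA : 0 < 1 - (if k+1 = n then 0 else x (k+2)) := by
        by_contra h
        push_neg at h
        have h2 : pathP n d x (k+1) = (1 - (if k+1 = n then 0 else x (k+2))) * pathW d x (k+1) := rfl
        nlinarith [mul_nonneg (neg_nonneg.2 h) hW1.le]
      have hPk : 0 ≤ pathP n d x k := by
        have h1 : pathP n d x k = (1 - x (k+1)) * pathW d x k := by
          rw [pathP, if_neg (by omega)]
        have hxk := (hx.1 (k+1) (by omega) (by omega)).2
        rw [h1]
        nlinarith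
      rcases lt_or_eq_of_le hPk with h | h
      · exact h
      exfalso
      -- h : 0 = pathP n d x k
      have hWd : pathW d x (k+1) = d (k+1) := by
        have hl := P_low n d x hx k hk
        have h0 : (1 - (if k+1 = n then 0 else x (k+2))) * (pathW d x (k+1) - d (k+1)) = 0 := by
          rw [← hl, ← h]
        rcases mul_eq_zero.1 h0 with h' | h'
        · exact absurd h' (by linarith)
        · linarith [sub_eq_zero.1 h']
      have casc : ∀ t', t' ≤ k → pathP n d x (k - t') = 0 ∧ pathW d x (k - t') = pathW d x k := by
        intro t'
        induction t' with
        | zero => intro _; exact ⟨h.symm, rfl⟩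
        | succ t' ih2 =>
          intro ht'
          obtain ⟨hP0, hWe⟩ := ih2 (by omega)
          have hidx : k - (t'+1) + 1 = k - t' := by omega
          have hln : k - (t'+1) < n := by omega
          have hkey := keyP n d x hx (k - (t'+1)) hln
          rw [hidx] at hkey
          have hWm : 0 < pathW d x (k - t') := posW n d x hd0 hd hx (k - t') (by omega)
          have hP0' : pathP n d x (k - (t'+1)) = 0 := by
            have h2 : pathP n d x (k - (t'+1)) * pathW d x (k - t') = 0 := by
              rw [hkey, hP0]; ring
            rcases mul_eq_zero.1 h2 with h' | h'
            · exact h'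
            · exact absurd h' (by linarith)
          have hW0' : pathW d x (k - (t'+1)) = pathW d x k := by
            have h3 := idW n d x (k - (t'+1)) hln
            rw [hidx] at h3
            rw [h3, hP0', hWe]; ring
          exact ⟨hP0', hW0'⟩
      have h0 := casc k le_rfl
      rw [Nat.sub_self, pathW_zero] at h0
      have hWkk := idW n d x k hk
      have hd1 := (hd (k+1) (by omega) (by omega)).2
      -- d 0 = W k = W(k+1) + P k = d(k+1) + 0 < d 0
      rw [← h] at hWkk
      rw [hWd] at hWkk
      linarith [h0.2, hWkk]
  intro k hk
  exact main (n - k) k (by omega)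

lemma gap (n : ℕ) (d x : ℕ → ℝ) (hd0 : 0 < d 0)
    (hd : ∀ j, 1 ≤ j → j ≤ n → 0 ≤ d j ∧ d j < d 0)
    (hx : IsPathFixedPoint n d x) :
    ∀ k, k < n → d (k+1) < pathW d x (k+1) := by
  intro k hk
  have hPk := posP n d x hd0 hd hx k (by omega)
  have hP1 := posP n d x hd0 hd hx (k+1) (by omega)
  have hW1 := posW n d x hd0 hd hx (k+1) (by omega)
  have hA : 0 < 1 - (if k+1 = n then 0 else x (k+2)) := by
    by_contra h
    push_neg at h
    have h2 : pathP n d x (k+1) = (1 - (if k+1 = n then 0 else x (k+2))) * pathW d x (k+1) := rfl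
    nlinarith [mul_nonneg (neg_nonneg.2 h) hW1.le]
  have hl := P_low n d x hx k hk
  by_contra h
  push_neg at h
  nlinarith [mul_nonpos_of_nonneg_of_nonpos hA.le (by linarith : pathW d x (k+1) - d (k+1) ≤ 0)]

lemma cmp_head (L L' U U' V V' c c' : ℝ)
    (e : L * V = U * (V - c)) (e' : L' * V' = U' * (V' - c'))
    (hU' : 0 < U') (hU : U' ≤ U) (hV' : 0 < V') (hV : V' ≤ V)
    (hc0 : 0 ≤ c) (hcc : c ≤ c') (hc'V : c' < V')
    (hstrict : U' < U ∨ c < c') : L' < L := by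
  have hVpos : 0 < V := lt_of_lt_of_le hV' hV
  have hUpos : 0 < U := lt_of_lt_of_le hU' hU
  have hc'0 : (0:ℝ) ≤ c' := le_trans hc0 hcc
  have h4 : (0:ℝ) < V' - c' := by linarith
  have h1 : U' * (V' - c') * V < U * (V - c) * V' := by
    rcases hstrict with hs | hs
    · nlinarith [mul_pos (sub_pos.2 hs) (mul_pos h4 hVpos),
        mul_nonneg (mul_nonneg hUpos.le hc'0) (sub_nonneg.2 hV),
        mul_nonneg (mul_nonneg hUpos.le (sub_nonneg.2 hcc)) hV'.le]
    · nlinarith [mul_nonneg (sub_nonneg.2 hU) (mul_pos h4 hVpos).le,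
        mul_nonneg (mul_nonneg hUpos.le hc'0) (sub_nonneg.2 hV),
        mul_pos (mul_pos hUpos (sub_pos.2 hs)) hV']
  have h2 : L' * (V * V') < L * (V * V') := by
    calc L' * (V * V') = (L' * V') * V := by ring
    _ = U' * (V' - c') * V := by rw [e']
    _ < U * (V - c) * V' := h1
    _ = (L * V) * V' := by rw [e]
    _ = L * (V * V') := by ring
  exact lt_of_mul_lt_mul_right h2 (mul_pos hVpos hV').le

lemma cmp_tail (L L' U U' V V' c : ℝ)
    (e : L * V = U * (V - c)) (e' : L' * V' = U' * (V' - c))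
    (hL' : 0 < L') (hL : L' ≤ L) (hV : 0 < V) (hVV : V ≤ V')
    (hc0 : 0 ≤ c) (hcV : c < V) : U' ≤ U := by
  have hcV' : c < V' := lt_of_lt_of_le hcV hVV
  have hfac : 0 < (V - c) * (V' - c) := mul_pos (by linarith) (by linarith)
  have h1 : L' * V' * (V - c) ≤ L * V * (V' - c) := by
    nlinarith [mul_nonneg (sub_nonneg.2 hL) (mul_pos hV (show (0:ℝ) < V' - c by linarith)).le,
      mul_nonneg hL'.le (mul_nonneg hc0 (sub_nonneg.2 hVV))]
  have h2 : U' * ((V - c) * (V' - c)) ≤ U * ((V - c) * (V' - c)) := by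
    calc U' * ((V - c) * (V' - c)) = (U' * (V' - c)) * (V - c) := by ring
    _ = (L' * V') * (V - c) := by rw [e']
    _ ≤ (L * V) * (V' - c) := h1
    _ = (U * (V - c)) * (V' - c) := by rw [e]
    _ = U * ((V - c) * (V' - c)) := by ring
  exact le_of_mul_le_mul_right h2 hfac

/-- Strict monotonicity of payoffs: increasing `d i` (keeping it below `d 0`)
strictly increases the payoff of node `i` at the fixed point. -/
theorem payoff_strict_monotone (n : ℕ) (hn : 1 ≤ n) (d : ℕ → ℝ)
    (hd0 : 0 < d 0) (hd : ∀ j, 1 ≤ j → j ≤ n → 0 ≤ d j ∧ d j < d 0)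
    (i : ℕ) (hi1 : 1 ≤ i) (hin : i ≤ n)
    (d' : ℝ) (hdi : d i < d') (hd'0 : d' < d 0)
    (x x' : ℕ → ℝ)
    (hx : IsPathFixedPoint n d x)
    (hx' : IsPathFixedPoint n (Function.update d i d') x') :
    (1 - (if i = n then 0 else x (i + 1))) * pathW d x i <
      (1 - (if i = n then 0 else x' (i + 1))) * pathW (Function.update d i d') x' i := by
  set D := Function.update d i d' with hDdef
  have hD0 : D 0 = d 0 := Function.update_of_ne (by omega) _ _
  have hDj : ∀ j, j ≠ i → D j = d j := fun j hj => Function.update_of_ne hj _ _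
  have hDi : D i = d' := Function.update_self _ _ _
  have hD0pos : 0 < D 0 := by rw [hD0]; exact hd0
  have hdD : ∀ j, 1 ≤ j → j ≤ n → 0 ≤ D j ∧ D j < D 0 := by
    intro j h1 h2
    rw [hD0]
    by_cases hji : j = i
    · rw [hji, hDi]
      exact ⟨le_trans (hd i hi1 hin).1 hdi.le, hd'0⟩
    · rw [hDj j hji]; exact hd j h1 h2
  have posW1 := posW n d x hd0 hd hx
  have posP1 := posP n d x hd0 hd hx
  have gap1 := gap n d x hd0 hd hx
  have posW2 := posW n D x' hD0pos hdD hx'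
  have posP2 := posP n D x' hD0pos hdD hx'
  have gap2 := gap n D x' hD0pos hdD hx'
  show pathP n d x i < pathP n D x' i
  by_contra hcon
  push_neg at hcon
  obtain ⟨j, rfl⟩ : ∃ j, i = j + 1 := ⟨i - 1, by omega⟩
  have hjn : j < n := by omega
  -- Tail: if W (j+1) ≤ W' (j+1) then they are equal
  have tail_eq : pathW d x (j+1) ≤ pathW D x' (j+1) →
      pathW D x' (j+1) = pathW d x (j+1) := by
    intro hWW
    have tail : ∀ k, j+1 ≤ k → k ≤ n →
        0 ≤ pathP n d x k - pathP n D x' k ∧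
        pathW D x' (j+1) - pathW d x (j+1) ≤ pathW D x' k - pathW d x k := by
      intro k hk
      induction k, hk using Nat.le_induction with
      | base => intro _; exact ⟨by linarith, le_refl _⟩
      | succ k hk ih =>
        intro hk1
        obtain ⟨ih1, ih2⟩ := ih (by omega)
        have hkn : k < n := by omega
        have idW1 := idW n d x k hkn
        have idW2 := idW n D x' k hkn
        have hWk1 : pathW d x (k+1) ≤ pathW D x' (k+1) := by linarith
        have e1 := keyP n d x hx k hkn
        have e2 := keyP n D x' hx' k hkn
        rw [hDj (k+1) (by omega)] at e2
        have hPle := cmp_tail (pathP n d x k) (pathP n D x' k)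
          (pathP n d x (k+1)) (pathP n D x' (k+1))
          (pathW d x (k+1)) (pathW D x' (k+1)) (d (k+1))
          e1 e2 (posP2 k (by omega)) (by linarith) (posW1 (k+1) (by omega)) hWk1
          (hd (k+1) (by omega) (by omega)).1 (gap1 k hkn)
        exact ⟨by linarith, by linarith⟩
    obtain ⟨c1, c2⟩ := tail n (by omega) le_rfl
    rw [pathP_top, pathP_top] at c1
    linarith
  have hWle : pathW D x' (j+1) ≤ pathW d x (j+1) := by
    rcases le_or_gt (pathW D x' (j+1)) (pathW d x (j+1)) with h | h
    · exact h
    · exact le_of_eq (tail_eq h.le)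
  -- Base strict comparison at node j
  have e1 := keyP n d x hx j hjn
  have e2 := keyP n D x' hx' j hjn
  rw [hDi] at e2
  have hc'V : d' < pathW D x' (j+1) := by
    have h := gap2 j hjn
    rwa [hDi] at h
  have hPj : pathP n D x' j < pathP n d x j :=
    cmp_head (pathP n d x j) (pathP n D x' j) (pathP n d x (j+1)) (pathP n D x' (j+1))
      (pathW d x (j+1)) (pathW D x' (j+1)) (d (j+1)) d'
      e1 e2 (posP2 (j+1) (by omega)) hcon (posW2 (j+1) (by omega)) hWle
      (hd (j+1) (by omega) (by omega)).1 hdi.le hc'V (Or.inr hdi)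
  have hWj : pathW D x' j < pathW d x j := by
    have i1 := idW n d x j hjn
    have i2 := idW n D x' j hjn
    linarith
  -- Head: propagate strict inequalities down to node 0
  have head : ∀ t, t ≤ j → pathP n D x' (j - t) < pathP n d x (j - t) ∧
      pathW D x' (j - t) < pathW d x (j - t) := by
    intro t
    induction t with
    | zero => intro _; exact ⟨hPj, hWj⟩
    | succ t ih =>
      intro ht
      obtain ⟨ihP, ihW⟩ := ih (by omega)
      have hidx : j - (t+1) + 1 = j - t := by omega
      have hm1 : 1 ≤ j - t := by omega
      have hln : j - (t+1) < n := by omega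
      have e1' := keyP n d x hx (j - (t+1)) hln
      have e2' := keyP n D x' hx' (j - (t+1)) hln
      rw [hidx] at e1' e2'
      rw [hDj (j - t) (by omega)] at e2'
      have hgap' : d (j - t) < pathW D x' (j - t) := by
        have h := gap2 (j - (t+1)) hln
        rw [hidx, hDj (j - t) (by omega)] at h
        exact h
      have hP' : pathP n D x' (j - (t+1)) < pathP n d x (j - (t+1)) :=
        cmp_head (pathP n d x (j - (t+1))) (pathP n D x' (j - (t+1)))
          (pathP n d x (j - t)) (pathP n D x' (j - t))
          (pathW d x (j - t)) (pathW D x' (j - t)) (d (j - t)) (d (j - t))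
          e1' e2' (posP2 (j - t) (by omega)) ihP.le
          (posW2 (j - t) (by omega)) ihW.le (hd (j - t) hm1 (by omega)).1 le_rfl hgap'
          (Or.inl ihP)
      have hW' : pathW D x' (j - (t+1)) < pathW d x (j - (t+1)) := by
        have i1 := idW n d x (j - (t+1)) hln
        have i2 := idW n D x' (j - (t+1)) hln
        rw [hidx] at i1 i2
        linarith
      exact ⟨hP', hW'⟩
  have hfin := (head j le_rfl).2
  rw [Nat.sub_self, pathW_zero, pathW_zero, hD0] at hfin
  exact lt_irrefl _ hfin
end

section
/- Efficiency of fixed points: let v* = max_l v_l, let l* be a leaf with v_{l*} = v*, and let l be any leaf with v_l < v*. Then in any fixed point of the tree bargaining equations, v*·∏_{t ∈ P(l*)} x_t > v_l·∏_{t ∈ P(l)} x_t, where P(l) denotes the set of non-root nodes on the unique path from leaf l to the root r. In particular, the highest offer reaching the seller comes from a maximum-value leaf. -/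
/-- A finite rooted tree, given by a parent function: the root is its own
parent, and every node reaches the root by iterating `parent`. -/
structure BTree where
  V : Type
  [instFintype : Fintype V]
  [instDecEq : DecidableEq V]
  root : V
  parent : V → V
  parent_root : parent root = root
  reaches_root : ∀ t : V, ∃ k : ℕ, parent^[k] t = root

attribute [instance] BTree.instFintype BTree.instDecEq

/-- The children of a node `s`: the non-root nodes whose parent is `s`. -/
def BTree.children (T : BTree) (s : T.V) : Finset T.V :=
  Finset.univ.filter fun t => t ≠ T.root ∧ T.parent t = s

/-- A leaf is a node with no children. -/
def BTree.IsLeaf (T : BTree) (l : T.V) : Prop :=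
  T.children l = ∅

/-- Maximum of `f` over a finite set `F`, with value `0` when `F` is empty. -/
noncomputable def fmax {α : Type*} (F : Finset α) (f : α → ℝ) : ℝ :=
  sSup (insert 0 (f '' (F : Set α)))

/-- `w` is the value function determined by leaf values `v` and shares `x`:
`w l = v l` at each leaf `l`, and `w s = max_{t ∈ children s} x t · w t` at
each internal node `s`. -/
def IsValueFn (T : BTree) (v x w : T.V → ℝ) : Prop :=
  (∀ l, T.IsLeaf l → w l = v l) ∧
  ∀ s, ¬ T.IsLeaf s → w s = fmax (T.children s) fun t => x t * w t

/-- `wexcl T x w s t`: the maximum value reaching `s` from its children other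
than `t` (`0` when `t` is the only child). -/
noncomputable def wexcl (T : BTree) (x w : T.V → ℝ) (s t : T.V) : ℝ :=
  fmax ((T.children s).erase t) fun t' => x t' * w t'

/-- A fixed point of the tree bargaining equations: `x` is a share vector
(`x root = 0`, `x t ∈ [0,1]` off the root), `w` is the induced value function,
and for every non-root `t` with parent `s`:
`(1 − x t)·w t = (1 − x s)·(max(w_{s∖t}, x t · w t) − w_{s∖t})`. -/
def IsTreeFixedPoint (T : BTree) (v x w : T.V → ℝ) : Prop :=
  IsValueFn T v x w ∧
  x T.root = 0 ∧
  (∀ t, t ≠ T.root → 0 ≤ x t ∧ x t ≤ 1) ∧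
  ∀ t, t ≠ T.root →
    (1 - x t) * w t =
      (1 - x (T.parent t)) *
        (max (wexcl T x w (T.parent t) t) (x t * w t) - wexcl T x w (T.parent t) t)

open Classical in
/-- `pathProd T x l`: the product of the shares over all non-root nodes on the
unique path from `l` to the root. -/
noncomputable def pathProd (T : BTree) (x : T.V → ℝ) (l : T.V) : ℝ :=
  ∏ t ∈ Finset.univ.filter (fun t => t ≠ T.root ∧ ∃ k : ℕ, T.parent^[k] l = t), x t

/- ===== Auxiliary lemmas ===== -/

section FmaxLemmas
variable {α : Type*}

lemma fmax_eq_max' (F : Finset α) (f : α → ℝ) :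
    fmax F f = (insert (0:ℝ) (F.image f)).max' (Finset.insert_nonempty _ _) := by
  rw [fmax, ← Finset.coe_image, ← Finset.coe_insert]
  exact (Finset.insert_nonempty _ _).csSup_eq_max'

lemma fmax_nonneg (F : Finset α) (f : α → ℝ) : 0 ≤ fmax F f := by
  rw [fmax_eq_max']; exact Finset.le_max' _ _ (Finset.mem_insert_self _ _)

lemma le_fmax {F : Finset α} {a : α} (f : α → ℝ) (h : a ∈ F) : f a ≤ fmax F f := by
  rw [fmax_eq_max']
  exact Finset.le_max' _ _ (Finset.mem_insert_of_mem (Finset.mem_image_of_mem f h))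

lemma fmax_le {F : Finset α} {f : α → ℝ} {b : ℝ} (hb : 0 ≤ b) (h : ∀ a ∈ F, f a ≤ b) :
    fmax F f ≤ b := by
  rw [fmax_eq_max']
  apply Finset.max'_le
  intro y hy
  rcases Finset.mem_insert.1 hy with rfl | hy
  · exact hb
  · obtain ⟨a, ha, rfl⟩ := Finset.mem_image.1 hy
    exact h a ha

lemma fmax_exists {F : Finset α} {f : α → ℝ} (hF : F.Nonempty)
    (h0 : ∃ a ∈ F, 0 ≤ f a) : ∃ a ∈ F, fmax F f = f a := by
  rw [fmax_eq_max']
  have hmem := Finset.max'_mem (insert (0:ℝ) (F.image f)) (Finset.insert_nonempty _ _)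
  rcases Finset.mem_insert.1 hmem with h | h
  · obtain ⟨a, ha, hfa⟩ := h0
    refine ⟨a, ha, ?_⟩
    have h1 : f a ≤ (insert (0:ℝ) (F.image f)).max' (Finset.insert_nonempty _ _) :=
      Finset.le_max' _ _ (Finset.mem_insert_of_mem (Finset.mem_image_of_mem f ha))
    rw [h]
    linarith
  · obtain ⟨a, ha, hfa⟩ := Finset.mem_image.1 h
    exact ⟨a, ha, hfa.symm⟩

lemma fmax_mono {F G : Finset α} (f : α → ℝ) (h : F ⊆ G) : fmax F f ≤ fmax G f :=
  fmax_le (fmax_nonneg _ _) fun a ha => le_fmax f (h ha)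

lemma fmax_erase {F : Finset α} [DecidableEq α] {c : α} (f : α → ℝ) (hc : c ∈ F) :
    fmax F f = max (f c) (fmax (F.erase c) f) := by
  apply le_antisymm
  · apply fmax_le (le_trans (fmax_nonneg _ _) (le_max_right _ _))
    intro a ha
    rcases eq_or_ne a c with rfl | hne
    · exact le_max_left _ _
    · exact le_trans (le_fmax f (Finset.mem_erase.2 ⟨hne, ha⟩)) (le_max_right _ _)
  · exact max_le (le_fmax f hc) (fmax_mono f (Finset.erase_subset _ _))

end FmaxLemmas

lemma wexcl_def (T : BTree) (x w : T.V → ℝ) (s t : T.V) :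
    wexcl T x w s t = fmax ((T.children s).erase t) fun t' => x t' * w t' := rfl

/- ===== Tree basics ===== -/

lemma iterate_root (T : BTree) : ∀ k, T.parent^[k] T.root = T.root
  | 0 => rfl
  | k+1 => by rw [Function.iterate_succ_apply, T.parent_root, iterate_root T k]

lemma eq_root_of_cycle (T : BTree) {t : T.V} {p : ℕ} (hp : p ≠ 0)
    (h : T.parent^[p] t = t) : t = T.root := by
  obtain ⟨d, hd⟩ := T.reaches_root t
  have hmul : ∀ m : ℕ, T.parent^[m * p] t = t := by
    intro m
    induction m with
    | zero => simp
    | succ m ih => rw [Nat.succ_mul, Function.iterate_add_apply, h, ih]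
  have h2 : T.parent^[d * p - d + d] t = T.root := by
    rw [Function.iterate_add_apply, hd, iterate_root]
  have h3 : d * p - d + d = d * p :=
    Nat.sub_add_cancel (Nat.le_mul_of_pos_right d (Nat.pos_of_ne_zero hp))
  rw [h3, hmul d] at h2
  exact h2

noncomputable def bdepth (T : BTree) (t : T.V) : ℕ := Nat.find (T.reaches_root t)

lemma bdepth_spec (T : BTree) (t : T.V) : T.parent^[bdepth T t] t = T.root :=
  Nat.find_spec (T.reaches_root t)

lemma bdepth_le (T : BTree) {t : T.V} {k : ℕ} (h : T.parent^[k] t = T.root) :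
    bdepth T t ≤ k := Nat.find_le h

lemma bdepth_min (T : BTree) {t : T.V} {k : ℕ} (h : k < bdepth T t) :
    T.parent^[k] t ≠ T.root := Nat.find_min (T.reaches_root t) h

lemma bdepth_parent (T : BTree) {t : T.V} (ht : t ≠ T.root) :
    bdepth T t = bdepth T (T.parent t) + 1 := by
  have h1 : bdepth T t ≤ bdepth T (T.parent t) + 1 :=
    bdepth_le T (by rw [Function.iterate_succ_apply]; exact bdepth_spec T _)
  have h0 : bdepth T t ≠ 0 := by
    intro h
    apply ht
    have := bdepth_spec T t
    rwa [h] at this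
  obtain ⟨d, hd⟩ := Nat.exists_eq_succ_of_ne_zero h0
  have h2 : bdepth T (T.parent t) ≤ d := by
    apply bdepth_le T
    have := bdepth_spec T t
    rwa [hd, Function.iterate_succ_apply] at this
  omega

lemma bdepth_lt_card (T : BTree) (t : T.V) : bdepth T t < Fintype.card T.V := by
  have key : ∀ i j : ℕ, i < j → j < bdepth T t + 1 →
      T.parent^[i] t = T.parent^[j] t → False := by
    intro i j hlt hj hij
    have hd : T.parent^[bdepth T t - j + i] t = T.root := by
      have h5 : T.parent^[bdepth T t - j] (T.parent^[j] t) = T.root := by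
        rw [← Function.iterate_add_apply]
        rw [(by omega : bdepth T t - j + j = bdepth T t)]
        exact bdepth_spec T t
      rw [← hij] at h5
      rwa [← Function.iterate_add_apply] at h5
    exact bdepth_min T (by omega) hd
  have hinj : Set.InjOn (fun i => T.parent^[i] t) (Finset.range (bdepth T t + 1)) := by
    intro i hi j hj hij
    simp only [Finset.coe_range, Set.mem_Iio] at hi hj
    simp only at hij
    rcases lt_trichotomy i j with h | h | h
    · exact (key i j h hj hij).elim
    · exact h
    · exact (key j i h hi hij.symm).elim
  have h := Finset.card_le_card_of_injOn (fun i => T.parent^[i] t)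
    (fun i _ => Finset.mem_univ _) hinj
  simpa using h

lemma mem_children {T : BTree} {s c : T.V} :
    c ∈ T.children s ↔ c ≠ T.root ∧ T.parent c = s := by
  simp [BTree.children]

lemma child_ne (T : BTree) {s c : T.V} (hc : c ∈ T.children s) : c ≠ s := by
  intro h
  obtain ⟨hcr, hp⟩ := mem_children.1 hc
  subst h
  exact hcr (eq_root_of_cycle T one_ne_zero (by simpa using hp))

lemma child_measure (T : BTree) {s c : T.V} {n : ℕ} (hc : c ∈ T.children s)
    (hs : Fintype.card T.V - bdepth T s ≤ n + 1) :
    Fintype.card T.V - bdepth T c ≤ n := by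
  obtain ⟨hcr, hp⟩ := mem_children.1 hc
  have h := bdepth_parent T hcr
  rw [hp] at h
  have := bdepth_lt_card T c
  omega

/- ===== Path sets, leaves, offers ===== -/

open Classical in
noncomputable def pathSet (T : BTree) (s l : T.V) : Finset T.V :=
  Finset.univ.filter fun t => (∃ i, T.parent^[i] l = t) ∧ t ≠ s ∧ ∃ j, T.parent^[j] t = s

open Classical in
lemma mem_pathSet {T : BTree} {s l t : T.V} :
    t ∈ pathSet T s l ↔ (∃ i, T.parent^[i] l = t) ∧ t ≠ s ∧ ∃ j, T.parent^[j] t = s := by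
  simp [pathSet]

noncomputable def offer (T : BTree) (v x : T.V → ℝ) (s l : T.V) : ℝ :=
  v l * ∏ t ∈ pathSet T s l, x t

open Classical in
noncomputable def leavesIn (T : BTree) (s : T.V) : Finset T.V :=
  Finset.univ.filter fun l => T.IsLeaf l ∧ ∃ k, T.parent^[k] l = s

open Classical in
lemma mem_leavesIn {T : BTree} {s l : T.V} :
    l ∈ leavesIn T s ↔ T.IsLeaf l ∧ ∃ k, T.parent^[k] l = s := by
  simp [leavesIn]

noncomputable def Mv (T : BTree) (v : T.V → ℝ) (s : T.V) : ℝ := fmax (leavesIn T s) v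

lemma pathSet_self (T : BTree) {s : T.V} (hs : s ≠ T.root) : pathSet T s s = ∅ := by
  ext t
  simp only [mem_pathSet, Finset.notMem_empty, iff_false, not_and]
  rintro ⟨i, hi⟩ hts ⟨j, hj⟩
  have hcyc : T.parent^[j + i] s = s := by
    rw [Function.iterate_add_apply, hi, hj]
  rcases Nat.eq_zero_or_pos (j + i) with h0 | h0
  · have hi0 : i = 0 := by omega
    rw [hi0] at hi
    simp at hi
    exact hts hi.symm
  · exact hs (eq_root_of_cycle T (by omega) hcyc)

lemma pathSet_insert (T : BTree) {s c l : T.V} {k : ℕ} (hc : c ∈ T.children s)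
    (hk : T.parent^[k] l = c) :
    pathSet T s l = insert c (pathSet T c l) := by
  obtain ⟨hcr, hp⟩ := mem_children.1 hc
  have hk1 : T.parent^[k + 1] l = s := by
    rw [Function.iterate_succ_apply', hk, hp]
  ext t
  simp only [mem_pathSet, Finset.mem_insert]
  constructor
  · rintro ⟨⟨i, hi⟩, hts, ⟨j, hj⟩⟩
    rcases lt_trichotomy i k with hik | hik | hik
    · right
      have hkc : T.parent^[k - i] t = c := by
        rw [← hi, ← Function.iterate_add_apply, (by omega : k - i + i = k), hk]
      have htc : t ≠ c := by
        intro h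
        subst h
        exact hcr (eq_root_of_cycle T (by omega : k - i ≠ 0) hkc)
      exact ⟨⟨i, hi⟩, htc, ⟨k - i, hkc⟩⟩
    · left
      rw [← hi, hik, hk]
    · exfalso
      have hts' : T.parent^[i - (k+1)] s = t := by
        rw [← hk1, ← Function.iterate_add_apply, (by omega : i - (k+1) + (k+1) = i), hi]
      have hcyc : T.parent^[j + (i - (k+1))] s = s := by
        rw [Function.iterate_add_apply, hts', hj]
      rcases Nat.eq_zero_or_pos (j + (i - (k+1))) with h0 | h0
      · have hz : i - (k+1) = 0 := by omega
        rw [hz] at hts'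
        simp at hts'
        exact hts hts'.symm
      · have hsroot : s = T.root := eq_root_of_cycle T (by omega) hcyc
        apply hts
        rw [← hts', hsroot, iterate_root]
  · rintro (rfl | ⟨⟨i, hi⟩, htc, ⟨j, hj⟩⟩)
    · exact ⟨⟨k, hk⟩, child_ne T hc, ⟨1, by simpa using hp⟩⟩
    · refine ⟨⟨i, hi⟩, ?_, ⟨j + 1, by rw [Function.iterate_succ_apply', hj, hp]⟩⟩
      intro h
      have hcyc : T.parent^[j + 1] t = t := by
        rw [Function.iterate_succ_apply', hj, hp, ← h]
      have htr : t = T.root := eq_root_of_cycle T (Nat.succ_ne_zero j) hcyc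
      apply hcr
      rw [← hj, htr, iterate_root]

lemma offer_step (T : BTree) (v x : T.V → ℝ) {s c l : T.V} {k : ℕ}
    (hc : c ∈ T.children s) (hk : T.parent^[k] l = c) :
    offer T v x s l = x c * offer T v x c l := by
  unfold offer
  rw [pathSet_insert T hc hk, Finset.prod_insert (by simp [mem_pathSet])]
  ring

lemma leavesIn_self {T : BTree} {s : T.V} (hs : T.IsLeaf s) : s ∈ leavesIn T s :=
  mem_leavesIn.2 ⟨hs, 0, rfl⟩

lemma leavesIn_leaf (T : BTree) {s : T.V} (hs : T.IsLeaf s) (hroot : ¬ T.IsLeaf T.root) :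
    leavesIn T s = {s} := by
  ext l
  simp only [Finset.mem_singleton, mem_leavesIn]
  constructor
  · rintro ⟨hl, k, hk⟩
    rcases Nat.eq_zero_or_pos k with rfl | hk0
    · simpa using hk
    · exfalso
      obtain ⟨k', rfl⟩ := Nat.exists_eq_succ_of_ne_zero hk0.ne'
      have hpc : T.parent (T.parent^[k'] l) = s := by
        have h := hk
        rwa [Function.iterate_succ_apply'] at h
      have hcr : T.parent^[k'] l ≠ T.root := by
        intro h
        rw [h, T.parent_root] at hpc
        exact hroot (by rw [hpc]; exact hs)
      have hmem : T.parent^[k'] l ∈ T.children s := mem_children.2 ⟨hcr, hpc⟩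
      have hs' : T.children s = ∅ := hs
      rw [hs'] at hmem
      simpa using hmem
  · rintro rfl
    exact ⟨hs, 0, rfl⟩

lemma leavesIn_mono (T : BTree) {s c : T.V} (hc : c ∈ T.children s) :
    leavesIn T c ⊆ leavesIn T s := by
  intro l hl
  obtain ⟨hleaf, k, hk⟩ := mem_leavesIn.1 hl
  exact mem_leavesIn.2 ⟨hleaf, k + 1,
    by rw [Function.iterate_succ_apply', hk, (mem_children.1 hc).2]⟩

lemma leavesIn_child (T : BTree) {s l : T.V} (hs : ¬ T.IsLeaf s) (hl : l ∈ leavesIn T s) :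
    ∃ c ∈ T.children s, l ∈ leavesIn T c := by
  obtain ⟨hleaf, hex⟩ := mem_leavesIn.1 hl
  classical
  have hk : T.parent^[Nat.find hex] l = s := Nat.find_spec hex
  have hk0 : Nat.find hex ≠ 0 := by
    intro h
    rw [h] at hk
    simp at hk
    subst hk
    exact hs hleaf
  obtain ⟨k', hkk⟩ := Nat.exists_eq_succ_of_ne_zero hk0
  have hpc : T.parent (T.parent^[k'] l) = s := by
    have h := hk
    rwa [hkk, Function.iterate_succ_apply'] at h
  have hcr : T.parent^[k'] l ≠ T.root := by
    intro h
    rw [h, T.parent_root] at hpc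
    have hks : T.parent^[k'] l = s := by rw [h, hpc]
    exact Nat.find_min hex (by omega) hks
  exact ⟨T.parent^[k'] l, mem_children.2 ⟨hcr, hpc⟩, mem_leavesIn.2 ⟨hleaf, k', rfl⟩⟩

lemma leavesIn_nonempty (T : BTree) (s : T.V) : (leavesIn T s).Nonempty := by
  suffices h : ∀ n, ∀ s : T.V, Fintype.card T.V - bdepth T s ≤ n → (leavesIn T s).Nonempty from
    h _ s le_rfl
  intro n
  induction n with
  | zero =>
    intro s hs
    exact absurd (bdepth_lt_card T s) (by omega)
  | succ n ih =>
    intro s hs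
    by_cases hl : T.IsLeaf s
    · exact ⟨s, leavesIn_self hl⟩
    · obtain ⟨c, hc⟩ := Finset.nonempty_iff_ne_empty.2 hl
      obtain ⟨l, hl'⟩ := ih c (child_measure T hc hs)
      exact ⟨l, leavesIn_mono T hc hl'⟩
/- ===== Fixed point lemmas ===== -/

section FP
variable {T : BTree} {v x w : T.V → ℝ}

lemma x_bounds (hfp : IsTreeFixedPoint T v x w) (t : T.V) : 0 ≤ x t ∧ x t ≤ 1 := by
  by_cases ht : t = T.root
  · rw [ht, hfp.2.1]; exact ⟨le_refl 0, zero_le_one⟩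
  · exact hfp.2.2.1 t ht

lemma w_pos (hv : ∀ l, T.IsLeaf l → 0 < v l) (hfp : IsTreeFixedPoint T v x w) (t : T.V) :
    0 < w t := by
  obtain ⟨⟨hwleaf, hwint⟩, hxroot, hxmem, heq⟩ := hfp
  suffices h : ∀ n, ∀ t : T.V, Fintype.card T.V - bdepth T t ≤ n → 0 < w t from h _ t le_rfl
  intro n
  induction n with
  | zero =>
    intro t ht
    exact absurd (bdepth_lt_card T t) (by omega)
  | succ n ih =>
    intro t ht
    by_cases hl : T.IsLeaf t
    · rw [hwleaf t hl]; exact hv t hl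
    · obtain ⟨c, hc⟩ := Finset.nonempty_iff_ne_empty.2 hl
      have hwc : 0 < w c := ih c (child_measure T hc ht)
      obtain ⟨hcr, hpc⟩ := mem_children.1 hc
      rw [hwint t hl]
      rcases lt_or_eq_of_le (hxmem c hcr).1 with hx0 | hx0
      · exact lt_of_lt_of_le (mul_pos hx0 hwc) (le_fmax (fun c => x c * w c) hc)
      · exfalso
        have h1 := heq c hcr
        rw [hpc, ← hx0] at h1
        have h2 : (0:ℝ) ≤ wexcl T x w t c := fmax_nonneg _ _
        rw [zero_mul, max_eq_left h2, sub_self, mul_zero, sub_zero, one_mul] at h1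
        exact hwc.ne' h1

lemma x_pos (hv : ∀ l, T.IsLeaf l → 0 < v l) (hfp : IsTreeFixedPoint T v x w)
    {t : T.V} (ht : t ≠ T.root) : 0 < x t := by
  rcases lt_or_eq_of_le (hfp.2.2.1 t ht).1 with h | h
  · exact h
  · exfalso
    have h1 := hfp.2.2.2 t ht
    rw [← h] at h1
    have h2 : (0:ℝ) ≤ wexcl T x w (T.parent t) t := fmax_nonneg _ _
    rw [zero_mul, max_eq_left h2, sub_self, mul_zero, sub_zero, one_mul] at h1
    exact (w_pos hv hfp t).ne' h1

lemma x_prop (hv : ∀ l, T.IsLeaf l → 0 < v l) (hfp : IsTreeFixedPoint T v x w) :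
    ∀ j : ℕ, ∀ t c : T.V, T.parent^[j] t = c → c ≠ T.root → x t < 1 → x c < 1 := by
  intro j
  induction j with
  | zero =>
    intro t c h _ hx
    simp only [Function.iterate_zero, id_eq] at h
    exact h ▸ hx
  | succ j ih =>
    intro t c h hcr hx
    have htr : t ≠ T.root := by
      intro h0
      rw [h0, iterate_root] at h
      exact hcr h.symm
    have h1 := hfp.2.2.2 t htr
    have hwt := w_pos hv hfp t
    have hlhs : 0 < (1 - x t) * w t := mul_pos (by linarith) hwt
    rw [h1] at hlhs
    have h2 : 0 ≤ max (wexcl T x w (T.parent t) t) (x t * w t) - wexcl T x w (T.parent t) t :=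
      sub_nonneg.2 (le_max_left _ _)
    have h3 : x (T.parent t) < 1 := by
      by_contra h4
      push_neg at h4
      nlinarith
    exact ih (T.parent t) c (by rw [← Function.iterate_succ_apply]; exact h) hcr h3

end FP
/- ===== Main induction ===== -/

lemma main_ind (T : BTree) (v x w : T.V → ℝ)
    (hv : ∀ l, T.IsLeaf l → 0 < v l) (hroot : ¬ T.IsLeaf T.root)
    (hfp : IsTreeFixedPoint T v x w) :
    ∀ n : ℕ, ∀ s : T.V, Fintype.card T.V - bdepth T s ≤ n →
      (∀ l ∈ leavesIn T s, v l = Mv T v s → offer T v x s l = w s) ∧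
      (∀ l ∈ leavesIn T s, v l < Mv T v s → offer T v x s l < w s) := by
  obtain ⟨⟨hwleaf, hwint⟩, hxroot, hxmem, heq⟩ := hfp
  have hfp' : IsTreeFixedPoint T v x w := ⟨⟨hwleaf, hwint⟩, hxroot, hxmem, heq⟩
  have hwpos : ∀ t, 0 < w t := w_pos hv hfp'
  have hx01 : ∀ t, 0 ≤ x t ∧ x t ≤ 1 := x_bounds hfp'
  have hMex : ∀ u : T.V, ∃ l' ∈ leavesIn T u, v l' = Mv T v u := by
    intro u
    obtain ⟨l0, hl0⟩ := leavesIn_nonempty T u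
    obtain ⟨l', hl', hM⟩ := fmax_exists ⟨l0, hl0⟩ ⟨l0, hl0, (hv l0 (mem_leavesIn.1 hl0).1).le⟩
    exact ⟨l', hl', hM.symm⟩
  have hprod01 : ∀ (u l' : T.V), (∏ t ∈ pathSet T u l', x t) ≤ 1 :=
    fun u l' => Finset.prod_le_one (fun t _ => (hx01 t).1) (fun t _ => (hx01 t).2)
  have hoffer_le : ∀ (u l' : T.V), l' ∈ leavesIn T u → offer T v x u l' ≤ v l' :=
    fun u l' hl' =>
      mul_le_of_le_one_right (hv l' (mem_leavesIn.1 hl').1).le (hprod01 u l')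
  intro n
  induction n with
  | zero =>
    intro s hs
    exact absurd (bdepth_lt_card T s) (by omega)
  | succ n ih =>
    intro s hs
    by_cases hsl : T.IsLeaf s
    · -- leaf case
      have hset : leavesIn T s = {s} := leavesIn_leaf T hsl hroot
      have hsr : s ≠ T.root := fun h => hroot (h ▸ hsl)
      have hMs : Mv T v s = v s := by
        apply le_antisymm
        · apply fmax_le (hv s hsl).le
          intro a ha
          rw [hset, Finset.mem_singleton] at ha
          exact le_of_eq (by rw [ha])
        · exact le_fmax v (hset ▸ Finset.mem_singleton_self s)
      constructor
      · intro l hl _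
        rw [hset, Finset.mem_singleton] at hl
        subst hl
        simp [offer, pathSet_self T hsr, hwleaf _ hsl]
      · intro l hl hvl
        rw [hset, Finset.mem_singleton] at hl
        subst hl
        rw [hMs] at hvl
        exact absurd hvl (lt_irrefl _)
    · -- internal case
      have hws : w s = fmax (T.children s) (fun c => x c * w c) := hwint s hsl
      have hIH : ∀ c ∈ T.children s,
          (∀ l ∈ leavesIn T c, v l = Mv T v c → offer T v x c l = w c) ∧
          (∀ l ∈ leavesIn T c, v l < Mv T v c → offer T v x c l < w c) :=
        fun c hc => ih c (child_measure T hc hs)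
      have hwM : ∀ c ∈ T.children s, w c ≤ Mv T v c := by
        intro c hc
        obtain ⟨lc, hlc, hvlc⟩ := hMex c
        have h1 := (hIH c hc).1 lc hlc hvlc
        calc w c = offer T v x c lc := h1.symm
          _ ≤ v lc := hoffer_le c lc hlc
          _ = Mv T v c := hvlc
      have hMcMs : ∀ c ∈ T.children s, Mv T v c ≤ Mv T v s :=
        fun c hc => fmax_mono v (leavesIn_mono T hc)
      have hole : ∀ c ∈ T.children s, x c * w c ≤ w s := by
        intro c hc
        rw [hws]
        exact le_fmax (fun c => x c * w c) hc
      have hch : (T.children s).Nonempty := Finset.nonempty_iff_ne_empty.2 hsl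
      have hwsM : w s ≤ Mv T v s := by
        obtain ⟨c0, hc0⟩ := hch
        obtain ⟨d, hd, hfd⟩ := fmax_exists (f := fun c => x c * w c)
          (⟨c0, hc0⟩ : (T.children s).Nonempty)
          ⟨c0, hc0, mul_nonneg (hx01 c0).1 (hwpos c0).le⟩
        calc w s = x d * w d := by rw [hws, hfd]
          _ ≤ w d := mul_le_of_le_one_left (hwpos d).le (hx01 d).2
          _ ≤ Mv T v d := hwM d hd
          _ ≤ Mv T v s := hMcMs d hd
      have hws_max : ∀ c ∈ T.children s, w s = max (x c * w c) (wexcl T x w s c) := by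
        intro c hc
        rw [hws, fmax_erase (fun t => x t * w t) hc]
        rfl
      -- key1: any child with share < 1 attains the max
      have key1 : ∀ c ∈ T.children s, x c < 1 → x c * w c = w s := by
        intro c hc hxc
        obtain ⟨hcr, hpc⟩ := mem_children.1 hc
        have h1 := heq c hcr
        rw [hpc] at h1
        have hlhs : 0 < (1 - x c) * w c := mul_pos (by linarith) (hwpos c)
        rw [h1] at hlhs
        have hoe : wexcl T x w s c < x c * w c := by
          by_contra h4
          push_neg at h4
          rw [max_eq_left h4, sub_self, mul_zero] at hlhs
          exact lt_irrefl 0 hlhs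
        rw [hws_max c hc, max_eq_left hoe.le]
      have key1' : ∀ c ∈ T.children s, x c * w c ≠ w s → x c = 1 := by
        intro c hc hne
        rcases lt_or_eq_of_le (hx01 c).2 with h | h
        · exact absurd (key1 c hc h) hne
        · exact h
      -- keyP: a child with share 1 and w < Mv gives a contradiction
      have keyP : ∀ c ∈ T.children s, x c = 1 → w c < Mv T v c → False := by
        intro c hc hxc hwlt
        obtain ⟨hcr, hpc⟩ := mem_children.1 hc
        obtain ⟨lc, hlc, hvlc⟩ := hMex c
        have hoff : offer T v x c lc = w c := (hIH c hc).1 lc hlc hvlc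
        have hex2 : ∃ t ∈ pathSet T c lc, x t < 1 := by
          by_contra h4
          push_neg at h4
          have hp1 : ∏ t ∈ pathSet T c lc, x t = 1 :=
            Finset.prod_eq_one (fun t ht => le_antisymm (hx01 t).2 (h4 t ht))
          have hvw : v lc = w c := by
            rw [← hoff]
            simp [offer, hp1]
          rw [← hvw, hvlc] at hwlt
          exact lt_irrefl _ hwlt
        obtain ⟨t, ht, hxt⟩ := hex2
        obtain ⟨-, -, j, hj⟩ := mem_pathSet.1 ht
        have hlt1 := x_prop hv hfp' j t c hj hcr hxt
        rw [hxc] at hlt1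
        exact lt_irrefl _ hlt1
      -- key2: a child whose subtree contains a global max attains the max
      have key2 : ∀ c ∈ T.children s, Mv T v c = Mv T v s → x c * w c = w s := by
        intro c hc hMc
        rcases lt_or_eq_of_le (hole c hc) with hlt | heq2
        · exfalso
          have hxc : x c = 1 := key1' c hc hlt.ne
          apply keyP c hc hxc
          calc w c = x c * w c := by rw [hxc, one_mul]
            _ < w s := hlt
            _ ≤ Mv T v s := hwsM
            _ = Mv T v c := hMc.symm
        · exact heq2
      have hMchild : ∃ d ∈ T.children s, Mv T v d = Mv T v s := by
        obtain ⟨l0, hl0, hv0⟩ := hMex s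
        obtain ⟨d, hd, hld⟩ := leavesIn_child T hsl hl0
        refine ⟨d, hd, le_antisymm (hMcMs d hd) ?_⟩
        rw [← hv0]
        exact le_fmax v hld
      -- key3: a child of strictly smaller subtree max loses strictly
      have key3 : ∀ c ∈ T.children s, Mv T v c < Mv T v s → x c * w c < w s := by
        intro c hc hMc
        rcases lt_or_eq_of_le (hole c hc) with hlt | heq2
        · exact hlt
        · exfalso
          obtain ⟨d, hd, hMd⟩ := hMchild
          have hdc : d ≠ c := by
            intro h
            rw [h] at hMd
            exact hMc.ne hMd
          have hod : x d * w d = w s := key2 d hd hMd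
          obtain ⟨hdr, hpd⟩ := mem_children.1 hd
          have hed : w s ≤ wexcl T x w s d := by
            rw [← heq2, wexcl_def]
            exact le_fmax (fun t => x t * w t) (Finset.mem_erase.2 ⟨Ne.symm hdc, hc⟩)
          have h1 := heq d hdr
          rw [hpd] at h1
          have hxd : x d = 1 := by
            have hmax : max (wexcl T x w s d) (x d * w d) = wexcl T x w s d :=
              max_eq_left (hod.le.trans hed)
            rw [hmax, sub_self, mul_zero] at h1
            have hwd := hwpos d
            rcases mul_eq_zero.1 h1 with h | h
            · linarith
            · linarith
          apply keyP d hd hxd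
          calc w d = x d * w d := by rw [hxd, one_mul]
            _ = w s := hod
            _ = x c * w c := heq2.symm
            _ ≤ w c := mul_le_of_le_one_left (hwpos c).le (hx01 c).2
            _ ≤ Mv T v c := hwM c hc
            _ < Mv T v s := hMc
            _ = Mv T v d := hMd.symm
      refine ⟨?_, ?_⟩
      · intro l hl hvl
        obtain ⟨c, hc, hlc⟩ := leavesIn_child T hsl hl
        have hMc : Mv T v c = Mv T v s := by
          apply le_antisymm (hMcMs c hc)
          rw [← hvl]
          exact le_fmax v hlc
        have hoc : offer T v x c l = w c := (hIH c hc).1 l hlc (by rw [hvl, ← hMc])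
        obtain ⟨-, k, hk⟩ := mem_leavesIn.1 hlc
        rw [offer_step T v x hc hk, hoc]
        exact key2 c hc hMc
      · intro l hl hvl
        obtain ⟨c, hc, hlc⟩ := leavesIn_child T hsl hl
        obtain ⟨-, k, hk⟩ := mem_leavesIn.1 hlc
        rw [offer_step T v x hc hk]
        rcases lt_or_eq_of_le (le_fmax v hlc : v l ≤ Mv T v c) with hlt | heq3
        · have h1 : offer T v x c l < w c := (hIH c hc).2 l hlc hlt
          have hxc : 0 < x c := x_pos hv hfp' (mem_children.1 hc).1
          calc x c * offer T v x c l < x c * w c := mul_lt_mul_of_pos_left h1 hxc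
            _ ≤ w s := hole c hc
        · have hMlt : Mv T v c < Mv T v s := lt_of_le_of_lt (le_of_eq heq3.symm) hvl
          have hoc : offer T v x c l = w c := (hIH c hc).1 l hlc heq3
          rw [hoc]
          exact key3 c hc hMlt
/-- Efficiency of fixed points: a maximum-value leaf makes a strictly higher
offer to the seller than any leaf of smaller value. -/
theorem tree_fixed_point_efficient (T : BTree) (v x w : T.V → ℝ)
    (hv : ∀ l, T.IsLeaf l → 0 < v l) (hroot : ¬ T.IsLeaf T.root)
    (hfp : IsTreeFixedPoint T v x w)
    (lstar : T.V) (hlstar : T.IsLeaf lstar)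
    (hmax : ∀ l, T.IsLeaf l → v l ≤ v lstar)
    (l : T.V) (hl : T.IsLeaf l) (hlt : v l < v lstar) :
    v l * pathProd T x l < v lstar * pathProd T x lstar := by
  have hpath : ∀ l' : T.V, v l' * pathProd T x l' = offer T v x T.root l' := by
    intro l'
    unfold offer pathProd
    congr 1
    apply Finset.prod_congr _ (fun _ _ => rfl)
    ext t
    simp only [Finset.mem_filter, Finset.mem_univ, true_and, mem_pathSet]
    constructor
    · rintro ⟨htr, k, hk⟩
      exact ⟨⟨k, hk⟩, htr, T.reaches_root t⟩
    · rintro ⟨⟨k, hk⟩, htr, -⟩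
      exact ⟨htr, k, hk⟩
  have h1 := main_ind T v x w hv hroot hfp (Fintype.card T.V) T.root (Nat.sub_le _ _)
  have hMr : Mv T v T.root = v lstar := by
    apply le_antisymm
    · apply fmax_le (hv lstar hlstar).le
      intro a ha
      exact hmax a (mem_leavesIn.1 ha).1
    · exact le_fmax v (mem_leavesIn.2 ⟨hlstar, T.reaches_root lstar⟩)
  have ha := h1.1 lstar (mem_leavesIn.2 ⟨hlstar, T.reaches_root lstar⟩) hMr.symm
  have hb := h1.2 l (mem_leavesIn.2 ⟨hl, T.reaches_root l⟩) (by rw [hMr]; exact hlt)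
  rw [hpath l, hpath lstar, ha]
  exact hb
end
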